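/- A graph H on [n] has a nonempty cubic (3-regular on its support) subgraph if and only if there exists some vertex i such that the minimum over spanning subgraphs G ⊆ H of ∑_j f_j(d_j(G)) is 0, where f_i(x) = (x-3)^2 and f_j(x) = x(x-3)^2 for j ≠ i. -/
import Mathlib


/-- The degree of vertex `i` in `G`. -/
noncomputable def deg {n : ℕ} (G : SimpleGraph (Fin n)) (i : Fin n) : ℕ := (G.neighborSet i).ncard

lemma term_nonneg {n : ℕ} (G : SimpleGraph (Fin n)) (i j : Fin n) :
    (0 : ℤ) ≤ if j = i then ((deg G j : ℤ) - 3) ^ 2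
      else (deg G j : ℤ) * ((deg G j : ℤ) - 3) ^ 2 := by
  split
  · positivity
  · positivity

/-- A graph `H` on `[n]` has a nonempty cubic subgraph (a subgraph with at least one edge
in which every vertex of positive degree has degree `3`) iff for some vertex `i` the minimum
over spanning subgraphs `G ⊆ H` of `∑ j, f j (d_j(G))` is `0`, where `f i x = (x-3)²` and
`f j x = x(x-3)²` for `j ≠ i`. -/
theorem cubic_subgraph_iff_min_zero (n : ℕ) (H : SimpleGraph (Fin n)) :
    (∃ G ≤ H, G.edgeSet.Nonempty ∧ ∀ j, deg G j = 0 ∨ deg G j = 3) ↔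
      ∃ i : Fin n,
        IsLeast {s : ℤ | ∃ G ≤ H, s = ∑ j : Fin n,
          if j = i then ((deg G j : ℤ) - 3) ^ 2
          else (deg G j : ℤ) * ((deg G j : ℤ) - 3) ^ 2} 0 := by
  constructor
  · rintro ⟨G, hGH, ⟨e, he⟩, hdeg⟩
    induction e using Sym2.inductionOn with
    | hf a b =>
      rw [SimpleGraph.mem_edgeSet] at he
      have hda : deg G a = 3 := by
        rcases hdeg a with h | h
        · exfalso
          have hb : b ∈ G.neighborSet a := he
          have hemp := (Set.ncard_eq_zero (Set.toFinite _)).mp h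
          rw [hemp] at hb
          exact hb
        · exact h
      refine ⟨a, ?_, ?_⟩
      · refine ⟨G, hGH, ?_⟩
        symm
        apply Finset.sum_eq_zero
        intro j _
        split
        · next h => subst h; rw [hda]; ring
        · rcases hdeg j with h | h <;> rw [h] <;> ring
      · rintro s ⟨G', _, rfl⟩
        exact Finset.sum_nonneg fun j _ => term_nonneg G' a j
  · rintro ⟨i, ⟨G, hGH, hs⟩, _⟩
    have hzero := (Finset.sum_eq_zero_iff_of_nonneg fun j _ => term_nonneg G i j).mp hs.symm
    have hi : deg G i = 3 := by
      have := hzero i (Finset.mem_univ i)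
      simp only [if_pos rfl] at this
      have := sq_eq_zero_iff.mp this
      omega
    have hall : ∀ j, deg G j = 0 ∨ deg G j = 3 := by
      intro j
      by_cases hj : j = i
      · right; rw [hj, hi]
      · have := hzero j (Finset.mem_univ j)
        rw [if_neg hj] at this
        rcases mul_eq_zero.mp this with h | h
        · left; exact_mod_cast h
        · right; have := sq_eq_zero_iff.mp h; omega
    have hne : (G.neighborSet i).Nonempty := by
      apply Set.nonempty_of_ncard_ne_zero
      rw [show (G.neighborSet i).ncard = deg G i from rfl, hi]
      omega
    obtain ⟨v, hv⟩ := hne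
    exact ⟨G, hGH, ⟨s(i, v), hv⟩, hall⟩
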